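/- arXiv:1807.03728 — 3 statements merged into one kernel-verified Lean document; each statement's English description precedes it below -/
import Mathlib

section
/- For λ > 0, the coefficients of the stage f^{(1)} = e^{-λ/2} g + (1 - e^{-λ/2} - (λ/2) e^{-λ/2}) M + (λ/2) e^{-λ/2} P are nonnegative and sum to 1; likewise for f^1 = e^{-λ} g + (1 - e^{-λ} - λ e^{-λ/2}) M + λ e^{-λ/2} P. In particular, if g, M, P ≥ 0 pointwise, then f^{(1)} ≥ 0 and f^1 ≥ 0. -/
lemma key1 (lam : ℝ) (hlam : 0 < lam) :
    0 ≤ 1 - Real.exp (-(lam/2)) - (lam/2) * Real.exp (-(lam/2)) := by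
  have h := Real.add_one_le_exp (lam/2)
  have hp : 0 < Real.exp (-(lam/2)) := Real.exp_pos _
  have he : Real.exp (lam/2) * Real.exp (-(lam/2)) = 1 := by
    rw [← Real.exp_add]; simp
  nlinarith

lemma key2 (lam : ℝ) (hlam : 0 < lam) :
    0 ≤ 1 - Real.exp (-lam) - lam * Real.exp (-(lam/2)) := by
  have h : lam/2 < Real.sinh (lam/2) := Real.self_lt_sinh_iff.mpr (half_pos hlam)
  rw [Real.sinh_eq] at h
  have hp : 0 < Real.exp (-(lam/2)) := Real.exp_pos _
  have he : Real.exp (lam/2) * Real.exp (-(lam/2)) = 1 := by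
    rw [← Real.exp_add]; simp
  have he2 : Real.exp (-(lam/2)) * Real.exp (-(lam/2)) = Real.exp (-lam) := by
    rw [← Real.exp_add]; ring_nf
  nlinarith

theorem stmt_6 {α : Type*} (lam : ℝ) (hlam : 0 < lam) :
    (0 ≤ Real.exp (-(lam/2)) ∧
     0 ≤ 1 - Real.exp (-(lam/2)) - (lam/2) * Real.exp (-(lam/2)) ∧
     0 ≤ (lam/2) * Real.exp (-(lam/2)) ∧
     Real.exp (-(lam/2)) + (1 - Real.exp (-(lam/2)) - (lam/2) * Real.exp (-(lam/2)))
       + (lam/2) * Real.exp (-(lam/2)) = 1) ∧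
    (0 ≤ Real.exp (-lam) ∧
     0 ≤ 1 - Real.exp (-lam) - lam * Real.exp (-(lam/2)) ∧
     0 ≤ lam * Real.exp (-(lam/2)) ∧
     Real.exp (-lam) + (1 - Real.exp (-lam) - lam * Real.exp (-(lam/2)))
       + lam * Real.exp (-(lam/2)) = 1) ∧
    (∀ g M P : α → ℝ, (∀ x, 0 ≤ g x) → (∀ x, 0 ≤ M x) → (∀ x, 0 ≤ P x) →
      (∀ x, 0 ≤ Real.exp (-(lam/2)) * g x
          + (1 - Real.exp (-(lam/2)) - (lam/2) * Real.exp (-(lam/2))) * M x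
          + (lam/2) * Real.exp (-(lam/2)) * P x) ∧
      (∀ x, 0 ≤ Real.exp (-lam) * g x
          + (1 - Real.exp (-lam) - lam * Real.exp (-(lam/2))) * M x
          + lam * Real.exp (-(lam/2)) * P x)) := by
  have hp : 0 ≤ Real.exp (-(lam/2)) := (Real.exp_pos _).le
  have hq : 0 ≤ Real.exp (-lam) := (Real.exp_pos _).le
  have h1 := key1 lam hlam
  have h2 := key2 lam hlam
  have hc1 : 0 ≤ (lam/2) * Real.exp (-(lam/2)) :=
    mul_nonneg (by linarith) hp
  have hc2 : 0 ≤ lam * Real.exp (-(lam/2)) := mul_nonneg hlam.le hp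
  refine ⟨⟨hp, h1, hc1, by ring⟩, ⟨hq, h2, hc2, by ring⟩, ?_⟩
  intro g M P hg hM hP
  refine ⟨fun x => ?_, fun x => ?_⟩
  · have := hg x; have := hM x; have := hP x
    have := mul_nonneg hp (hg x); have := mul_nonneg h1 (hM x)
    have := mul_nonneg hc1 (hP x); linarith
  · have := mul_nonneg hq (hg x); have := mul_nonneg h2 (hM x)
    have := mul_nonneg hc2 (hP x); linarith
end

section
/- Let M_i > 0 for i = 1,…,N with periodic indexing, and consider the flux F_{i+1/2} = (√(M_i M_{i+1})/Δv)(f_{i+1}/M_{i+1} - f_i/M_i) for positive f_i. Then ∑_i (F_{i+1/2} - F_{i-1/2})(log(f_i/M_i) + 1) = -∑_i F_{i+1/2}(log(f_{i+1}/M_{i+1}) - log(f_i/M_i)) ≤ 0, with equality if and only if f_i/M_i is constant in i. -/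
theorem stmt_12 {N : ℕ} [NeZero N] (f M : Fin N → ℝ) (Δv : ℝ) (hΔv : 0 < Δv)
    (hf : ∀ i, 0 < f i) (hM : ∀ i, 0 < M i)
    (F : Fin N → ℝ)
    (hF : ∀ i : Fin N, F i =
      Real.sqrt (M i * M (i + 1)) / Δv * (f (i + 1) / M (i + 1) - f i / M i)) :
    (∑ i, (F i - F (i - 1)) * (Real.log (f i / M i) + 1) =
      -∑ i, F i * (Real.log (f (i + 1) / M (i + 1)) - Real.log (f i / M i))) ∧
    (∑ i, (F i - F (i - 1)) * (Real.log (f i / M i) + 1) ≤ 0) ∧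
    ((∑ i, (F i - F (i - 1)) * (Real.log (f i / M i) + 1) = 0) ↔
      ∀ i j : Fin N, f i / M i = f j / M j) := by
  set x : Fin N → ℝ := fun i => f i / M i with hx
  have hxpos : ∀ i, 0 < x i := fun i => div_pos (hf i) (hM i)
  have hc : ∀ i : Fin N, 0 < Real.sqrt (M i * M (i + 1)) / Δv := fun i =>
    div_pos (Real.sqrt_pos.2 (mul_pos (hM i) (hM (i + 1)))) hΔv
  set L : Fin N → ℝ := fun i => Real.log (x i) with hL
  -- summation by parts
  have hshift : ∑ i, F (i - 1) * (L i + 1) = ∑ i, F i * (L (i + 1) + 1) := by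
    apply Fintype.sum_equiv (Equiv.subRight (1 : Fin N))
    intro i
    simp [Equiv.subRight, sub_add_cancel]
  have h1 : ∑ i, (F i - F (i - 1)) * (L i + 1) = -∑ i, F i * (L (i + 1) - L i) := by
    calc ∑ i, (F i - F (i - 1)) * (L i + 1)
        = ∑ i, F i * (L i + 1) - ∑ i, F (i - 1) * (L i + 1) := by
          rw [← Finset.sum_sub_distrib]
          exact Finset.sum_congr rfl (fun i _ => by ring)
      _ = ∑ i, F i * (L i + 1) - ∑ i, F i * (L (i + 1) + 1) := by rw [hshift]
      _ = ∑ i, (F i * (L i + 1) - F i * (L (i + 1) + 1)) := (Finset.sum_sub_distrib _ _).symm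
      _ = -∑ i, F i * (L (i + 1) - L i) := by
          rw [← Finset.sum_neg_distrib]
          exact Finset.sum_congr rfl (fun i _ => by ring)
  -- each term of the dissipation sum is nonnegative
  have key : ∀ i : Fin N, 0 ≤ F i * (L (i + 1) - L i) := by
    intro i
    rw [hF i]
    rcases le_total (x i) (x (i + 1)) with h | h
    · have hl : L i ≤ L (i + 1) := Real.log_le_log (hxpos i) h
      exact mul_nonneg (mul_nonneg (hc i).le (sub_nonneg.2 h)) (sub_nonneg.2 hl)
    · have hl : L (i + 1) ≤ L i := Real.log_le_log (hxpos (i + 1)) h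
      exact mul_nonneg_iff.2 (Or.inr
        ⟨mul_nonpos_of_nonneg_of_nonpos (hc i).le (sub_nonpos.2 h), sub_nonpos.2 hl⟩)
  have keyzero : ∀ i : Fin N, F i * (L (i + 1) - L i) = 0 → x (i + 1) = x i := by
    intro i h0
    by_contra hne
    rcases lt_or_gt_of_ne hne with hlt | hlt
    · have hl : L (i + 1) < L i := Real.log_lt_log (hxpos (i + 1)) hlt
      have : 0 < F i * (L (i + 1) - L i) := by
        rw [hF i]
        exact mul_pos_of_neg_of_neg
          (mul_neg_of_pos_of_neg (hc i) (sub_neg.2 hlt)) (sub_neg.2 hl)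
      exact this.ne' h0
    · have hl : L i < L (i + 1) := Real.log_lt_log (hxpos i) hlt
      have : 0 < F i * (L (i + 1) - L i) := by
        rw [hF i]
        exact mul_pos (mul_pos (hc i) (sub_pos.2 hlt)) (sub_pos.2 hl)
      exact this.ne' h0
  open Fin.NatCast Fin.CommRing in
  have chain : (∀ i : Fin N, x (i + 1) = x i) → ∀ i j : Fin N, x i = x j := by
    intro h
    have key2 : ∀ (n : ℕ) (i : Fin N), x (i + (n : Fin N)) = x i := by
      intro n
      induction n with
      | zero => intro i; simp
      | succ n ih =>
          intro i
          have hcast : ((n + 1 : ℕ) : Fin N) = (n : Fin N) + 1 := by push_cast; ring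
          rw [hcast, ← add_assoc, h, ih]
    intro i j
    have hji : j = i + (((j - i).val : ℕ) : Fin N) := by
      rw [Fin.cast_val_eq_self]; ring
    rw [hji, key2]
  refine ⟨h1, ?_, ?_⟩
  · rw [h1, neg_nonpos]
    exact Finset.sum_nonneg (fun i _ => key i)
  · rw [h1, neg_eq_zero]
    constructor
    · intro h0 i j
      have hz := (Finset.sum_eq_zero_iff_of_nonneg (fun i _ => key i)).1 h0
      exact chain (fun k => keyzero k (hz k (Finset.mem_univ k))) i j
    · intro hconst
      apply Finset.sum_eq_zero
      intro i _
      have hxe : x (i + 1) = x i := hconst (i + 1) i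
      simp only [hL, hxe, sub_self, mul_zero]
end

section
/- Suppose T : V → V satisfies: for all f ≥ 0 and all a with 0 ≤ aΔt ≤ Δt_FE, f + aΔt T(f) ≥ 0; and suppose E_s : V → V satisfies g ≥ 0 ⟹ E_s g ≥ 0 for all s ≥ 0. Then the composite update f^{n+1} = E_{a2Δt}( w (Id + b2Δt T)(E_{a1Δt}((Id + b1Δt T)(E_{a0Δt} f^n))) + (1-w) E_{(1-a2)Δt} f^n ) preserves nonnegativity, provided a0, a1, b1, b2 ≥ 0, 0 ≤ a2, w ≤ 1, and Δt ≤ Δt_FE / max(b1, b2). -/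
theorem stmt_14 {α : Type*}
    (T : (α → ℝ) → (α → ℝ)) (E : ℝ → (α → ℝ) → (α → ℝ))
    (Δt ΔtFE : ℝ) (hΔt : 0 ≤ Δt)
    (hT : ∀ f : α → ℝ, (∀ x, 0 ≤ f x) →
      ∀ a : ℝ, 0 ≤ a * Δt → a * Δt ≤ ΔtFE →
        ∀ x, 0 ≤ (f + (a * Δt) • T f) x)
    (hE : ∀ s : ℝ, 0 ≤ s → ∀ g : α → ℝ, (∀ x, 0 ≤ g x) → ∀ x, 0 ≤ E s g x)
    (a0 a1 a2 b1 b2 w : ℝ)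
    (ha0 : 0 ≤ a0) (ha1 : 0 ≤ a1) (hb1 : 0 ≤ b1) (hb2 : 0 ≤ b2)
    (ha2 : 0 ≤ a2) (ha2' : a2 ≤ 1) (hw : 0 ≤ w) (hw' : w ≤ 1)
    (hCFL : max b1 b2 * Δt ≤ ΔtFE)
    (fn : α → ℝ) (hfn : ∀ x, 0 ≤ fn x) :
    ∀ x, 0 ≤
      (E (a2 * Δt)
        (w • (let f0 := E (a0 * Δt) fn
              let f1 := E (a1 * Δt) (f0 + (b1 * Δt) • T f0)
              f1 + (b2 * Δt) • T f1)
          + (1 - w) • E ((1 - a2) * Δt) fn)) x := by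
  have hb1' : b1 * Δt ≤ ΔtFE :=
    le_trans (mul_le_mul_of_nonneg_right (le_max_left b1 b2) hΔt) hCFL
  have hb2' : b2 * Δt ≤ ΔtFE :=
    le_trans (mul_le_mul_of_nonneg_right (le_max_right b1 b2) hΔt) hCFL
  have hf0 : ∀ x, 0 ≤ E (a0 * Δt) fn x := hE _ (mul_nonneg ha0 hΔt) fn hfn
  have hs1 : ∀ x, 0 ≤ (E (a0 * Δt) fn + (b1 * Δt) • T (E (a0 * Δt) fn)) x :=
    hT _ hf0 b1 (mul_nonneg hb1 hΔt) hb1'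
  have hf1 : ∀ x, 0 ≤ E (a1 * Δt) (E (a0 * Δt) fn + (b1 * Δt) • T (E (a0 * Δt) fn)) x :=
    hE _ (mul_nonneg ha1 hΔt) _ hs1
  set f1 := E (a1 * Δt) (E (a0 * Δt) fn + (b1 * Δt) • T (E (a0 * Δt) fn)) with hf1def
  have hs2 : ∀ x, 0 ≤ (f1 + (b2 * Δt) • T f1) x :=
    hT _ hf1 b2 (mul_nonneg hb2 hΔt) hb2'
  have hE2 : ∀ x, 0 ≤ E ((1 - a2) * Δt) fn x :=
    hE _ (mul_nonneg (by linarith) hΔt) fn hfn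
  refine hE _ (mul_nonneg ha2 hΔt) _ ?_
  intro x
  simp only [Pi.add_apply, Pi.smul_apply, smul_eq_mul]
  have h1 : 0 ≤ f1 x + b2 * Δt * T f1 x := by simpa using hs2 x
  have h2 := hE2 x
  rw [hf1def] at h1
  nlinarith [mul_nonneg hw h1, mul_nonneg (by linarith : (0:ℝ) ≤ 1 - w) h2]
end
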